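/- Fix 0 < q < 1 and let f(r) = (1 − r²) ∏_{j=1}^{∞} [((1 − q^{2j} r²)(1 − q^{2j}/r²))/(1 − q^{2j})²]^{(−1)^j} for r ∈ (q,1). Then f is strictly monotone decreasing on (q,1); in particular f has no critical points in (q,1). -/

import Mathlib

/-- Mityuk's radius for the annulus `{q < |z| < 1}` with respect to the radial-slit
canonical domain (alternating exponents `(−1)^j`). -/
noncomputable def mityukRadiusRad (q r : ℝ) : ℝ :=
  (1 - r ^ 2) *
    ∏' j : ℕ,
      ((((1 - q ^ (2 * (j + 1)) * r ^ 2) * (1 - q ^ (2 * (j + 1)) / r ^ 2)) /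
        (1 - q ^ (2 * (j + 1))) ^ 2) ^ ((-1 : ℤ) ^ (j + 1)))

namespace MityukAux

/-- log of the `j`-th factor. -/
noncomputable def mw (q : ℝ) (j : ℕ) (r : ℝ) : ℝ :=
  (-1 : ℝ) ^ (j + 1) *
    (Real.log (1 - q ^ (2 * (j + 1)) * r ^ 2) + Real.log (1 - q ^ (2 * (j + 1)) / r ^ 2) -
      2 * Real.log (1 - q ^ (2 * (j + 1))))

/-- derivative of `mw q j`. -/
noncomputable def mW (q : ℝ) (j : ℕ) (r : ℝ) : ℝ :=
  (-1 : ℝ) ^ (j + 1) *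
    ((-(2 * q ^ (2 * (j + 1)) * r)) / (1 - q ^ (2 * (j + 1)) * r ^ 2) +
      (2 * q ^ (2 * (j + 1)) / r ^ 3) / (1 - q ^ (2 * (j + 1)) / r ^ 2))

variable {q r c : ℝ}

lemma ha_le (hq0 : 0 < q) (hq1 : q < 1) (j : ℕ) : q ^ (2 * (j + 1)) ≤ q ^ 2 :=
  pow_le_pow_of_le_one hq0.le hq1.le (by omega)

lemma ha_pos (hq0 : 0 < q) (j : ℕ) : 0 < q ^ (2 * (j + 1)) := pow_pos hq0 _

lemma denoms (hq0 : 0 < q) (hq1 : q < 1) (hqr : q < r) (hr1 : r < 1) (j : ℕ) :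
    0 < 1 - q ^ (2 * (j + 1)) * r ^ 2 ∧ 0 < 1 - q ^ (2 * (j + 1)) / r ^ 2 ∧
      0 < 1 - q ^ (2 * (j + 1)) := by
  have hale := ha_le hq0 hq1 j
  have hapos := ha_pos hq0 j
  have hr0 : 0 < r := hq0.trans hqr
  have hq2r : q ^ 2 < r ^ 2 := by nlinarith
  have hrr : r ^ 2 < 1 := by nlinarith
  have hm : q ^ (2 * (j + 1)) * r ^ 2 ≤ q ^ 2 * r ^ 2 :=
    mul_le_mul_of_nonneg_right hale (sq_nonneg r)
  have hq2 : q ^ 2 < 1 := by nlinarith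
  refine ⟨by nlinarith, ?_, by nlinarith⟩
  have : q ^ (2 * (j + 1)) / r ^ 2 < 1 := (div_lt_one (by positivity)).2 (by nlinarith)
  linarith

lemma hasDerivAt_mw (hq0 : 0 < q) (hq1 : q < 1) (hqr : q < r) (hr1 : r < 1) (j : ℕ) :
    HasDerivAt (mw q j) (mW q j r) r := by
  obtain ⟨h1, h2, _⟩ := denoms hq0 hq1 hqr hr1 j
  have hr0 : 0 < r := hq0.trans hqr
  set a := q ^ (2 * (j + 1)) with ha
  have d1 : HasDerivAt (fun y : ℝ => 1 - a * y ^ 2) (-(2 * a * r)) r := by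
    have := ((hasDerivAt_pow 2 r).const_mul a).const_sub 1
    exact this.congr_deriv (by simp only [Nat.cast_ofNat, Nat.reduceSub, pow_one]; ring)
  have d2 : HasDerivAt (fun y : ℝ => 1 - a / y ^ 2) (2 * a / r ^ 3) r := by
    have h := ((((hasDerivAt_pow 2 r).inv (by positivity))).const_mul a).const_sub 1
    have heq : (fun y : ℝ => 1 - a * (y ^ 2)⁻¹) = fun y : ℝ => 1 - a / y ^ 2 := by
      funext y; rw [div_eq_mul_inv]
    rw [show (fun x : ℝ => 1 - a * (fun x : ℝ => x ^ 2)⁻¹ x) = fun y : ℝ => 1 - a / y ^ 2 from heq] at h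
    refine h.congr_deriv ?_
    simp only [Nat.cast_ofNat, Nat.reduceSub, pow_one]
    field_simp
  have l1 := d1.log (ne_of_gt h1)
  have l2 := d2.log (ne_of_gt h2)
  have := ((l1.add l2).sub_const (2 * Real.log (1 - a))).const_mul ((-1 : ℝ) ^ (j + 1))
  exact this

lemma bound_mW (hq0 : 0 < q) (hq1 : q < 1) (hqc : q < c) (hy : r ∈ Set.Ioo c 1) (j : ℕ) :
    ‖mW q j r‖ ≤ (2 / (1 - q ^ 2) + (2 / c ^ 3) / (1 - q ^ 2 / c ^ 2)) * q ^ (2 * (j + 1)) := by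
  obtain ⟨hcy, hy1⟩ := hy
  have hc0 : 0 < c := hq0.trans hqc
  have hy0 : 0 < r := hc0.trans hcy
  have hale := ha_le hq0 hq1 j
  have hapos := ha_pos hq0 j
  have hq2c : q ^ 2 < c ^ 2 := by nlinarith
  have hδ : 0 < 1 - q ^ 2 / c ^ 2 := by
    have : q ^ 2 / c ^ 2 < 1 := (div_lt_one (by positivity)).2 hq2c
    linarith
  have hq2 : 0 < 1 - q ^ 2 := by nlinarith
  obtain ⟨h1, h2, _⟩ := denoms hq0 hq1 (hqc.trans hcy) hy1 j
  set a := q ^ (2 * (j + 1)) with ha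
  have hd1 : 1 - q ^ 2 ≤ 1 - a * r ^ 2 := by
    have hm : a * r ^ 2 ≤ q ^ 2 * r ^ 2 := mul_le_mul_of_nonneg_right hale (sq_nonneg r)
    have hrr : r ^ 2 ≤ 1 := by nlinarith
    nlinarith [sq_nonneg q]
  have hc2r : c ^ 2 ≤ r ^ 2 := by nlinarith
  have hd2 : 1 - q ^ 2 / c ^ 2 ≤ 1 - a / r ^ 2 := by
    have : a / r ^ 2 ≤ q ^ 2 / c ^ 2 :=
      div_le_div₀ (by positivity) hale (by positivity) hc2r
    linarith
  rw [mW, Real.norm_eq_abs, abs_mul, abs_pow, abs_neg, abs_one, one_pow, one_mul]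
  have e1 : |(-(2 * a * r)) / (1 - a * r ^ 2)| = (2 * a * r) / (1 - a * r ^ 2) := by
    rw [abs_div, abs_neg, abs_of_nonneg (by positivity), abs_of_pos h1]
  have e2 : |(2 * a / r ^ 3) / (1 - a / r ^ 2)| = (2 * a / r ^ 3) / (1 - a / r ^ 2) := by
    rw [abs_div, abs_of_nonneg (by positivity), abs_of_pos h2]
  calc |(-(2 * a * r)) / (1 - a * r ^ 2) + (2 * a / r ^ 3) / (1 - a / r ^ 2)|
      ≤ |(-(2 * a * r)) / (1 - a * r ^ 2)| + |(2 * a / r ^ 3) / (1 - a / r ^ 2)| := abs_add_le _ _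
    _ = (2 * a * r) / (1 - a * r ^ 2) + (2 * a / r ^ 3) / (1 - a / r ^ 2) := by rw [e1, e2]
    _ ≤ (2 * a) / (1 - q ^ 2) + (2 * a / c ^ 3) / (1 - q ^ 2 / c ^ 2) := by
        have t1 : (2 * a * r) / (1 - a * r ^ 2) ≤ (2 * a) / (1 - q ^ 2) :=
          div_le_div₀ (by positivity) (by nlinarith) hq2 hd1
        have hc3 : c ^ 3 ≤ r ^ 3 := pow_le_pow_left₀ hc0.le hcy.le 3
        have t2 : (2 * a / r ^ 3) / (1 - a / r ^ 2) ≤ (2 * a / c ^ 3) / (1 - q ^ 2 / c ^ 2) :=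
          div_le_div₀ (by positivity)
            (div_le_div_of_nonneg_left (by positivity) (by positivity) hc3) hδ hd2
        linarith
    _ = (2 / (1 - q ^ 2) + (2 / c ^ 3) / (1 - q ^ 2 / c ^ 2)) * a := by ring

lemma summable_geom_aux (hq0 : 0 < q) (hq1 : q < 1) (C : ℝ) :
    Summable (fun j : ℕ => C * q ^ (2 * (j + 1))) := by
  have h : Summable (fun j : ℕ => (q ^ 2) ^ j) :=
    summable_geometric_of_lt_one (by positivity) (by nlinarith)
  refine ((h.mul_left (C * q ^ 2))).congr fun j => ?_
  rw [pow_mul, pow_succ]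
  ring

lemma abs_log_le {x δ : ℝ} (hx : 0 ≤ x) (hδ : 0 < δ) (hle : δ ≤ 1 - x) :
    |Real.log (1 - x)| ≤ x / δ := by
  have h1x : 0 < 1 - x := lt_of_lt_of_le hδ hle
  have hnp : Real.log (1 - x) ≤ 0 := Real.log_nonpos (by linarith) (by linarith)
  rw [abs_of_nonpos hnp, ← Real.log_inv]
  have h2 := Real.log_le_sub_one_of_pos (inv_pos.2 h1x)
  have h3 : (1 - x)⁻¹ - 1 = x / (1 - x) := by field_simp; ring
  have h4 : x / (1 - x) ≤ x / δ := by gcongr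
  linarith

lemma summable_mw (hq0 : 0 < q) (hq1 : q < 1) (hqr : q < r) (hr1 : r < 1) :
    Summable (fun j => mw q j r) := by
  have hr0 : 0 < r := hq0.trans hqr
  have hq2 : 0 < 1 - q ^ 2 := by nlinarith
  have hq2r : q ^ 2 < r ^ 2 := by nlinarith
  have hδ : 0 < 1 - q ^ 2 / r ^ 2 := by
    have : q ^ 2 / r ^ 2 < 1 := (div_lt_one (by positivity)).2 hq2r
    linarith
  refine Summable.of_norm_bounded
    (summable_geom_aux hq0 hq1
      (r ^ 2 / (1 - q ^ 2) + (1 / r ^ 2) / (1 - q ^ 2 / r ^ 2) + 2 / (1 - q ^ 2))) fun j => ?_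
  have hale := ha_le hq0 hq1 j
  have hapos := ha_pos hq0 j
  obtain ⟨h1, h2, h3⟩ := denoms hq0 hq1 hqr hr1 j
  set a := q ^ (2 * (j + 1)) with ha
  have hm : a * r ^ 2 ≤ q ^ 2 * r ^ 2 := mul_le_mul_of_nonneg_right hale (sq_nonneg r)
  have hrr : r ^ 2 < 1 := by nlinarith
  have b1 : |Real.log (1 - a * r ^ 2)| ≤ (a * r ^ 2) / (1 - q ^ 2) :=
    abs_log_le (by positivity) hq2 (by nlinarith [sq_nonneg q])
  have b2 : |Real.log (1 - a / r ^ 2)| ≤ (a / r ^ 2) / (1 - q ^ 2 / r ^ 2) := by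
    refine abs_log_le (by positivity) hδ ?_
    have : a / r ^ 2 ≤ q ^ 2 / r ^ 2 := by gcongr
    linarith
  have b3 : |Real.log (1 - a)| ≤ a / (1 - q ^ 2) :=
    abs_log_le hapos.le hq2 (by nlinarith)
  rw [mw, Real.norm_eq_abs, abs_mul, abs_pow, abs_neg, abs_one, one_pow, one_mul]
  calc |Real.log (1 - a * r ^ 2) + Real.log (1 - a / r ^ 2) - 2 * Real.log (1 - a)|
      ≤ |Real.log (1 - a * r ^ 2)| + |Real.log (1 - a / r ^ 2)| + 2 * |Real.log (1 - a)| := by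
        have := abs_add_le (Real.log (1 - a * r ^ 2)) (Real.log (1 - a / r ^ 2))
        have h5 := abs_sub (Real.log (1 - a * r ^ 2) + Real.log (1 - a / r ^ 2))
          (2 * Real.log (1 - a))
        rw [abs_mul, abs_two] at h5
        linarith
    _ ≤ (a * r ^ 2) / (1 - q ^ 2) + (a / r ^ 2) / (1 - q ^ 2 / r ^ 2) + 2 * (a / (1 - q ^ 2)) := by
        linarith
    _ = (r ^ 2 / (1 - q ^ 2) + (1 / r ^ 2) / (1 - q ^ 2 / r ^ 2) + 2 / (1 - q ^ 2)) * a := by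
        ring

lemma prod_eq (hq0 : 0 < q) (hq1 : q < 1) (hqr : q < r) (hr1 : r < 1) :
    mityukRadiusRad q r = (1 - r ^ 2) * Real.exp (∑' j, mw q j r) := by
  unfold mityukRadiusRad
  congr 1
  rw [← ((summable_mw hq0 hq1 hqr hr1).hasSum.rexp).tprod_eq]
  refine tprod_congr fun j => ?_
  obtain ⟨h1, h2, h3⟩ := denoms hq0 hq1 hqr hr1 j
  set a := q ^ (2 * (j + 1)) with ha
  have hb : 0 < (1 - a * r ^ 2) * (1 - a / r ^ 2) / (1 - a) ^ 2 := by positivity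
  have hlog : Real.log ((1 - a * r ^ 2) * (1 - a / r ^ 2) / (1 - a) ^ 2) =
      Real.log (1 - a * r ^ 2) + Real.log (1 - a / r ^ 2) - 2 * Real.log (1 - a) := by
    rw [Real.log_div (by positivity) (by positivity), Real.log_mul h1.ne' h2.ne', Real.log_pow]
    push_cast; ring
  show _ = Real.exp (mw q j r)
  rw [mw]
  rcases Nat.even_or_odd j with he | ho
  · have hodd : Odd (j + 1) := he.add_one
    rw [hodd.neg_one_pow, hodd.neg_one_pow, zpow_neg_one, neg_one_mul, ← hlog, Real.exp_neg,
      Real.exp_log hb]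
  · have heven : Even (j + 1) := ho.add_one
    rw [heven.neg_one_pow, heven.neg_one_pow, zpow_one, one_mul, ← hlog, Real.exp_log hb]

lemma d_mono (hr0 : 0 < r) (hr1 : r < 1) {t t' : ℝ} (ht' : 0 < t') (htt : t' ≤ t)
    (ht : t < r ^ 2) (htr : t * r ^ 2 < 1) :
    (-(2 * t' * r)) / (1 - t' * r ^ 2) + (2 * t' / r ^ 3) / (1 - t' / r ^ 2) ≤
      (-(2 * t * r)) / (1 - t * r ^ 2) + (2 * t / r ^ 3) / (1 - t / r ^ 2) := by
  have ht0 : 0 < t := lt_of_lt_of_le ht' htt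
  have ht'r : t' < r ^ 2 := lt_of_le_of_lt htt ht
  have ht'r2 : t' * r ^ 2 < 1 := by nlinarith
  have key : ∀ s : ℝ, 0 < s → s < r ^ 2 → s * r ^ 2 < 1 →
      (-(2 * s * r)) / (1 - s * r ^ 2) + (2 * s / r ^ 3) / (1 - s / r ^ 2) =
        (2 * s * (1 - r ^ 4)) / (r * (r ^ 2 - s) * (1 - s * r ^ 2)) := by
    intro s hs0 hs1 hs2
    have hne1 : 1 - s * r ^ 2 ≠ 0 := by nlinarith
    have hne2 : 1 - s / r ^ 2 ≠ 0 := by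
      have : s / r ^ 2 < 1 := (div_lt_one (by positivity)).2 hs1
      linarith [this]
    have hne3 : r ^ 2 - s ≠ 0 := by nlinarith
    field_simp
    ring
  rw [key t ht0 ht htr, key t' ht' ht'r ht'r2]
  have hrr : r ^ 2 < 1 := by nlinarith
  have hr4 : r ^ 4 < 1 := by
    nlinarith [mul_lt_mul_of_pos_left hrr (show (0:ℝ) < r ^ 2 by positivity)]
  have hnum : 0 ≤ 2 * t * (1 - r ^ 4) := by nlinarith
  have hden : 0 < r * (r ^ 2 - t) * (1 - t * r ^ 2) :=
    mul_pos (mul_pos hr0 (by linarith)) (by linarith)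
  apply div_le_div₀ hnum (by nlinarith) hden
  have g1 : r ^ 2 - t ≤ r ^ 2 - t' := by linarith
  have g2 : 1 - t * r ^ 2 ≤ 1 - t' * r ^ 2 := by
    have := mul_le_mul_of_nonneg_right htt (sq_nonneg r)
    linarith
  have g3 : r * (r ^ 2 - t) ≤ r * (r ^ 2 - t') :=
    mul_le_mul_of_nonneg_left g1 hr0.le
  exact mul_le_mul g3 g2 (by linarith) (by nlinarith)

lemma pair_nonpos (hq0 : 0 < q) (hq1 : q < 1) (hqr : q < r) (hr1 : r < 1) (k : ℕ) :
    mW q (2 * k) r + mW q (2 * k + 1) r ≤ 0 := by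
  have hr0 : 0 < r := hq0.trans hqr
  have hq2r : q ^ 2 < r ^ 2 := by nlinarith
  have ha := ha_pos hq0 (2 * k + 1)
  have hb := ha_pos hq0 (2 * k)
  have hab : q ^ (2 * (2 * k + 1 + 1)) ≤ q ^ (2 * (2 * k + 1)) :=
    pow_le_pow_of_le_one hq0.le hq1.le (by omega)
  have hle := ha_le hq0 hq1 (2 * k)
  have ht : q ^ (2 * (2 * k + 1)) < r ^ 2 := lt_of_le_of_lt hle hq2r
  have hrr : r ^ 2 < 1 := by nlinarith
  have htr : q ^ (2 * (2 * k + 1)) * r ^ 2 < 1 := by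
    have := mul_le_mul_of_nonneg_right hle (sq_nonneg r)
    nlinarith [sq_nonneg q]
  have hmono := d_mono hr0 hr1 ha hab ht htr
  rw [mW, mW]
  have hodd : Odd (2 * k + 1) := ⟨k, by ring⟩
  have heven : Even (2 * k + 1 + 1) := hodd.add_one
  rw [hodd.neg_one_pow, heven.neg_one_pow, neg_one_mul, one_mul]
  linarith

set_option maxHeartbeats 1000000 in
lemma key_deriv (hq0 : 0 < q) (hq1 : q < 1) :
    ∀ r ∈ Set.Ioo q 1, ∃ D, D < 0 ∧ HasDerivAt (mityukRadiusRad q) D r := by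
  rintro r ⟨hqr, hr1⟩
  have hr0 : 0 < r := hq0.trans hqr
  set c := (q + r) / 2 with hc
  have hqc : q < c := by rw [hc]; linarith
  have hcr : c < r := by rw [hc]; linarith
  have hu := summable_geom_aux hq0 hq1 (2 / (1 - q ^ 2) + (2 / c ^ 3) / (1 - q ^ 2 / c ^ 2))
  have hrmem : r ∈ Set.Ioo c 1 := ⟨hcr, hr1⟩
  have hT : HasDerivAt (fun y => ∑' j, mw q j y) (∑' j, mW q j r) r :=
    hasDerivAt_tsum_of_isPreconnected hu isOpen_Ioo isPreconnected_Ioo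
      (fun j y hy => hasDerivAt_mw hq0 hq1 (hqc.trans hy.1) hy.2 j)
      (fun j y hy => bound_mW hq0 hq1 hqc hy j)
      hrmem (summable_mw hq0 hq1 hqr hr1) hrmem
  have hW : Summable (fun j => mW q j r) :=
    Summable.of_norm_bounded hu (fun j => bound_mW hq0 hq1 hqc hrmem j)
  have hT0 : (∑' j, mW q j r) ≤ 0 := by
    have hE : Summable (fun k => mW q (2 * k) r) :=
      hW.comp_injective (fun a b h => by omega)
    have hO : Summable (fun k => mW q (2 * k + 1) r) :=
      hW.comp_injective (fun a b h => by omega)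
    rw [← tsum_even_add_odd hE hO, ← Summable.tsum_add hE hO]
    exact tsum_nonpos fun k => pair_nonpos hq0 hq1 hqr hr1 k
  set T := fun y => ∑' j, mw q j y with hTdef
  have h1 : HasDerivAt (fun y : ℝ => 1 - y ^ 2) (-(2 * r)) r := by
    have := (hasDerivAt_pow 2 r).const_sub 1
    exact this.congr_deriv (by norm_num)
  have hF : HasDerivAt (fun y => (1 - y ^ 2) * Real.exp (T y))
      (-(2 * r) * Real.exp (T r) + (1 - r ^ 2) * (Real.exp (T r) * (∑' j, mW q j r))) r :=
    h1.mul (hT.exp)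
  refine ⟨_, ?_, hF.congr_of_eventuallyEq ?_⟩
  · have he : 0 < Real.exp (T r) := Real.exp_pos _
    have h2 : Real.exp (T r) * (∑' j, mW q j r) ≤ 0 :=
      mul_nonpos_of_nonneg_of_nonpos he.le hT0
    have h3 : (1 - r ^ 2) * (Real.exp (T r) * (∑' j, mW q j r)) ≤ 0 :=
      mul_nonpos_of_nonneg_of_nonpos (by nlinarith) h2
    nlinarith [mul_pos hr0 he]
  · exact Filter.eventuallyEq_of_mem (isOpen_Ioo.mem_nhds ⟨hqr, hr1⟩)
      (fun y hy => prod_eq hq0 hq1 hy.1 hy.2)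

end MityukAux

/-- For `0 < q < 1`, `f = mityukRadiusRad q` is strictly monotone
decreasing on `(q,1)`; in particular it has no critical points in `(q,1)`. -/
theorem mityuk_stmt9 (q : ℝ) (hq0 : 0 < q) (hq1 : q < 1) :
    StrictAntiOn (mityukRadiusRad q) (Set.Ioo q 1) ∧
    ∀ r ∈ Set.Ioo q 1, deriv (mityukRadiusRad q) r ≠ 0 := by
  have key := MityukAux.key_deriv hq0 hq1
  constructor
  · apply strictAntiOn_of_deriv_neg (convex_Ioo q 1)
    · intro x hx
      obtain ⟨D, _, h⟩ := key x hx
      exact h.differentiableAt.continuousAt.continuousWithinAt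
    · intro x hx
      rw [interior_Ioo] at hx
      obtain ⟨D, hD, h⟩ := key x hx
      rw [h.deriv]; exact hD
  · intro r hr
    obtain ⟨D, hD, h⟩ := key r hr
    rw [h.deriv]; exact ne_of_lt hD
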